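/- Let x, y ∈ ℝ^n with x ≠ 0, and define the symmetric n×n matrix H := (2/‖x‖²)·yy^⊤ + (8(x^⊤y)²/‖x‖⁶)·xx^⊤ − (2(x^⊤y)²/‖x‖⁴)·I − (4(x^⊤y)/‖x‖⁴)·(xy^⊤ + yx^⊤), where I is the n×n identity matrix. Then the operator (spectral) norm of H satisfies ‖H‖ ≤ 20‖y‖²/‖x‖². -/

import Mathlib

open Matrix

set_option maxHeartbeats 1000000
set_option synthInstance.maxHeartbeats 400000

private lemma dps_nonneg {n : ℕ} (u : Fin n → ℝ) : 0 ≤ u ⬝ᵥ u :=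
  Finset.sum_nonneg fun i _ => mul_self_nonneg (u i)

private lemma vmv_mulVec {n : ℕ} (u v z : Fin n → ℝ) :
    vecMulVec u v *ᵥ z = (v ⬝ᵥ z) • u := by
  funext i
  simp [mulVec, vecMulVec, dotProduct, Finset.sum_mul, Finset.mul_sum, mul_assoc, mul_comm,
    mul_left_comm]

private lemma norm_symm_eq {n : ℕ} (u : Fin n → ℝ) :
    ‖(WithLp.equiv 2 (Fin n → ℝ)).symm u‖ = Real.sqrt (u ⬝ᵥ u) := by
  rw [EuclideanSpace.norm_eq]
  congr 1
  simp [dotProduct, Real.norm_eq_abs, sq_abs, sq]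

private lemma clm_vmv_norm_le {n : ℕ} (u v : Fin n → ℝ) :
    ‖Matrix.toEuclideanCLM (𝕜 := ℝ) (vecMulVec u v)‖ ≤
      Real.sqrt (u ⬝ᵥ u) * Real.sqrt (v ⬝ᵥ v) := by
  apply ContinuousLinearMap.opNorm_le_bound _
    (by positivity)
  intro z
  have hz : z = (WithLp.equiv 2 (Fin n → ℝ)).symm (WithLp.equiv 2 (Fin n → ℝ) z) := rfl
  rw [hz, (show ∀ (A : Matrix (Fin n) (Fin n) ℝ) (w : Fin n → ℝ), Matrix.toEuclideanCLM (𝕜 := ℝ) A ((WithLp.equiv 2 (Fin n → ℝ)).symm w) = (WithLp.equiv 2 (Fin n → ℝ)).symm (Matrix.toLin' A w) from fun _ _ => rfl), Matrix.toLin'_apply, vmv_mulVec]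
  set z0 := WithLp.equiv 2 (Fin n → ℝ) z
  have h1 : ((WithLp.equiv 2 (Fin n → ℝ)).symm ((v ⬝ᵥ z0) • u)) =
      (v ⬝ᵥ z0) • ((WithLp.equiv 2 (Fin n → ℝ)).symm u) := rfl
  rw [h1, norm_smul, norm_symm_eq]
  have hcs : |v ⬝ᵥ z0| ≤ Real.sqrt (v ⬝ᵥ v) * ‖z‖ := by
    have h := abs_real_inner_le_norm ((WithLp.equiv 2 (Fin n → ℝ)).symm v) z
    have he : (inner ℝ ((WithLp.equiv 2 (Fin n → ℝ)).symm v) z : ℝ) = v ⬝ᵥ z0 := by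
      rw [EuclideanSpace.inner_eq_star_dotProduct]
      simp [z0]; exact dotProduct_comm _ _
    rwa [he, norm_symm_eq] at h
  calc |v ⬝ᵥ z0| * Real.sqrt (u ⬝ᵥ u)
      ≤ (Real.sqrt (v ⬝ᵥ v) * ‖z‖) * Real.sqrt (u ⬝ᵥ u) := by
        apply mul_le_mul_of_nonneg_right hcs (Real.sqrt_nonneg _)
    _ = Real.sqrt (u ⬝ᵥ u) * Real.sqrt (v ⬝ᵥ v) * ‖z‖ := by ring

theorem stmt14 {n : ℕ} (x y : Fin n → ℝ) (hx : x ≠ 0)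
    (H : Matrix (Fin n) (Fin n) ℝ)
    (hH : H = (2 / (x ⬝ᵥ x)) • vecMulVec y y
      + (8 * (x ⬝ᵥ y) ^ 2 / (x ⬝ᵥ x) ^ 3) • vecMulVec x x
      - (2 * (x ⬝ᵥ y) ^ 2 / (x ⬝ᵥ x) ^ 2) • (1 : Matrix (Fin n) (Fin n) ℝ)
      - (4 * (x ⬝ᵥ y) / (x ⬝ᵥ x) ^ 2) • (vecMulVec x y + vecMulVec y x)) :
    ‖Matrix.toEuclideanCLM (𝕜 := ℝ) H‖ ≤ 20 * (y ⬝ᵥ y) / (x ⬝ᵥ x) := by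
  set a := x ⬝ᵥ x with ha
  set b := y ⬝ᵥ y with hb
  set s := x ⬝ᵥ y with hs
  have ha0 : 0 < a := by
    rcases lt_or_eq_of_le (dps_nonneg x) with h | h
    · exact h
    · exact absurd (dotProduct_self_eq_zero.mp h.symm) hx
  have hb0 : 0 ≤ b := dps_nonneg y
  have hcs : s ^ 2 ≤ a * b := by
    have := abs_real_inner_le_norm ((WithLp.equiv 2 (Fin n → ℝ)).symm x)
      ((WithLp.equiv 2 (Fin n → ℝ)).symm y)
    rw [(show inner ℝ ((WithLp.equiv 2 (Fin n → ℝ)).symm x) ((WithLp.equiv 2 (Fin n → ℝ)).symm y) = x ⬝ᵥ y from by simp only [WithLp.equiv_symm_apply, EuclideanSpace.inner_toLp_toLp, star_trivial]; exact dotProduct_comm _ _), norm_symm_eq, norm_symm_eq] at this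
    have h2 := mul_self_le_mul_self (abs_nonneg _) this
    calc s ^ 2 = |s| * |s| := by rw [← abs_mul, abs_mul_self, sq]
      _ ≤ (Real.sqrt a * Real.sqrt b) * (Real.sqrt a * Real.sqrt b) := h2
      _ = a * b := by
          rw [mul_mul_mul_comm, Real.mul_self_sqrt ha0.le, Real.mul_self_sqrt hb0]
  set φ := Matrix.toEuclideanCLM (n := Fin n) (𝕜 := ℝ)
  have key : ∀ M : Matrix (Fin n) (Fin n) ℝ, ∀ c : ℝ, φ (c • M) = c • φ M := fun M c => by
    simp [φ]
  have hmap : φ H = (2 / a) • φ (vecMulVec y y)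
      + (8 * s ^ 2 / a ^ 3) • φ (vecMulVec x x)
      - (2 * s ^ 2 / a ^ 2) • φ 1
      - (4 * s / a ^ 2) • (φ (vecMulVec x y) + φ (vecMulVec y x)) := by
    rw [hH]; simp [map_sub, map_add, key]
  have hsq : ∀ u : Fin n → ℝ, Real.sqrt (u ⬝ᵥ u) * Real.sqrt (u ⬝ᵥ u) = u ⬝ᵥ u :=
    fun u => Real.mul_self_sqrt (dps_nonneg u)
  have hxy : Real.sqrt a * Real.sqrt b ≤ Real.sqrt (a * b) := by
    rw [Real.sqrt_mul ha0.le]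
  have h1 : ‖φ (vecMulVec y y)‖ ≤ b := by
    have := clm_vmv_norm_le y y; rwa [hsq] at this
  have h2 : ‖φ (vecMulVec x x)‖ ≤ a := by
    have := clm_vmv_norm_le x x; rwa [hsq] at this
  have hsab : Real.sqrt a * Real.sqrt b = Real.sqrt (a * b) := (Real.sqrt_mul ha0.le b).symm
  have h3 : ‖φ (vecMulVec x y)‖ ≤ Real.sqrt (a * b) := by
    have := clm_vmv_norm_le x y; rwa [hsab] at this
  have h4 : ‖φ (vecMulVec y x)‖ ≤ Real.sqrt (a * b) := by
    have := clm_vmv_norm_le y x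
    rw [mul_comm, hsab] at this; exact this
  have h5 : ‖φ (1 : Matrix (Fin n) (Fin n) ℝ)‖ ≤ 1 := by
    rw [_root_.map_one]; exact ContinuousLinearMap.norm_id_le
  have habs : |s| ≤ Real.sqrt (a * b) := by
    rw [← Real.sqrt_sq_eq_abs]
    exact Real.sqrt_le_sqrt hcs
  have hsqab : Real.sqrt (a * b) * Real.sqrt (a * b) = a * b :=
    Real.mul_self_sqrt (by positivity)
  have tri : ‖φ H‖ ≤ ‖(2 / a) • φ (vecMulVec y y)‖
      + ‖(8 * s ^ 2 / a ^ 3) • φ (vecMulVec x x)‖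
      + ‖(2 * s ^ 2 / a ^ 2) • φ (1 : Matrix (Fin n) (Fin n) ℝ)‖
      + (‖(4 * s / a ^ 2) • φ (vecMulVec x y)‖ + ‖(4 * s / a ^ 2) • φ (vecMulVec y x)‖) := by
    rw [hmap]
    calc ‖_ + _ - _ - (4 * s / a ^ 2) • (φ (vecMulVec x y) + φ (vecMulVec y x))‖
        ≤ ‖(2 / a) • φ (vecMulVec y y) + (8 * s ^ 2 / a ^ 3) • φ (vecMulVec x x)
            - (2 * s ^ 2 / a ^ 2) • φ 1‖
          + ‖(4 * s / a ^ 2) • (φ (vecMulVec x y) + φ (vecMulVec y x))‖ := norm_sub_le _ _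
      _ ≤ _ := by
          gcongr
          · exact le_trans (norm_sub_le _ _) (by gcongr; exact norm_add_le _ _)
          · rw [smul_add]; exact norm_add_le _ _
  have hnn : (0:ℝ) ≤ ‖φ (vecMulVec y y)‖ := norm_nonneg _
  have e1 : ‖(2 / a) • φ (vecMulVec y y)‖ ≤ 2 * b / a := by
    calc ‖(2 / a) • φ (vecMulVec y y)‖ ≤ ‖(2 / a : ℝ)‖ * ‖φ (vecMulVec y y)‖ := ContinuousLinearMap.opNorm_smul_le _ _
      _ ≤ (2 / a) * b := by
          rw [Real.norm_eq_abs, abs_of_nonneg (by positivity)]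
          gcongr
      _ = 2 * b / a := by ring
  have e2 : ‖(8 * s ^ 2 / a ^ 3) • φ (vecMulVec x x)‖ ≤ 8 * s ^ 2 / a ^ 2 := by
    calc ‖(8 * s ^ 2 / a ^ 3) • φ (vecMulVec x x)‖
        ≤ ‖(8 * s ^ 2 / a ^ 3 : ℝ)‖ * ‖φ (vecMulVec x x)‖ := ContinuousLinearMap.opNorm_smul_le _ _
      _ ≤ 8 * s ^ 2 / a ^ 3 * a := by
          rw [Real.norm_eq_abs, abs_of_nonneg (by positivity)]
          gcongr
      _ = 8 * s ^ 2 / a ^ 2 := by field_simp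
  have e3 : ‖(2 * s ^ 2 / a ^ 2) • φ (1 : Matrix (Fin n) (Fin n) ℝ)‖ ≤ 2 * s ^ 2 / a ^ 2 := by
    calc ‖(2 * s ^ 2 / a ^ 2) • φ (1 : Matrix (Fin n) (Fin n) ℝ)‖
        ≤ ‖(2 * s ^ 2 / a ^ 2 : ℝ)‖ * ‖φ (1 : Matrix (Fin n) (Fin n) ℝ)‖ := ContinuousLinearMap.opNorm_smul_le _ _
      _ ≤ 2 * s ^ 2 / a ^ 2 * 1 := by
          rw [Real.norm_eq_abs, abs_of_nonneg (by positivity)]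
          gcongr
      _ = 2 * s ^ 2 / a ^ 2 := mul_one _
  have e4 : ‖(4 * s / a ^ 2) • φ (vecMulVec x y)‖ ≤ 4 * |s| * Real.sqrt (a * b) / a ^ 2 := by
    have habs4 : ‖(4 * s / a ^ 2 : ℝ)‖ = 4 * |s| / a ^ 2 := by
      rw [Real.norm_eq_abs, abs_div, abs_mul, abs_of_nonneg (by norm_num : (0:ℝ) ≤ 4),
        abs_of_nonneg (by positivity : (0:ℝ) ≤ a ^ 2)]
    calc ‖(4 * s / a ^ 2) • φ (vecMulVec x y)‖
        ≤ ‖(4 * s / a ^ 2 : ℝ)‖ * ‖φ (vecMulVec x y)‖ := ContinuousLinearMap.opNorm_smul_le _ _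
      _ ≤ 4 * |s| / a ^ 2 * Real.sqrt (a * b) := by
          rw [habs4]; gcongr
      _ = 4 * |s| * Real.sqrt (a * b) / a ^ 2 := by ring
  have e5 : ‖(4 * s / a ^ 2) • φ (vecMulVec y x)‖ ≤ 4 * |s| * Real.sqrt (a * b) / a ^ 2 := by
    have habs4 : ‖(4 * s / a ^ 2 : ℝ)‖ = 4 * |s| / a ^ 2 := by
      rw [Real.norm_eq_abs, abs_div, abs_mul, abs_of_nonneg (by norm_num : (0:ℝ) ≤ 4),
        abs_of_nonneg (by positivity : (0:ℝ) ≤ a ^ 2)]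
    calc ‖(4 * s / a ^ 2) • φ (vecMulVec y x)‖
        ≤ ‖(4 * s / a ^ 2 : ℝ)‖ * ‖φ (vecMulVec y x)‖ := ContinuousLinearMap.opNorm_smul_le _ _
      _ ≤ 4 * |s| / a ^ 2 * Real.sqrt (a * b) := by
          rw [habs4]; gcongr
      _ = 4 * |s| * Real.sqrt (a * b) / a ^ 2 := by ring
  have hs2 : s ^ 2 / a ^ 2 ≤ b / a := by
    rw [div_le_div_iff₀ (by positivity) ha0]
    nlinarith
  have hss : |s| * Real.sqrt (a * b) / a ^ 2 ≤ b / a := by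
    rw [div_le_div_iff₀ (by positivity) ha0]
    nlinarith [mul_le_mul_of_nonneg_right habs (Real.sqrt_nonneg (a * b))]
  have final : ‖φ H‖ ≤ 20 * b / a := by
    have := tri
    have g2 : 8 * s ^ 2 / a ^ 2 ≤ 8 * (b / a) := by
      calc 8 * s ^ 2 / a ^ 2 = 8 * (s ^ 2 / a ^ 2) := by ring
        _ ≤ 8 * (b / a) := by gcongr
    have g3 : 2 * s ^ 2 / a ^ 2 ≤ 2 * (b / a) := by
      calc 2 * s ^ 2 / a ^ 2 = 2 * (s ^ 2 / a ^ 2) := by ring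
        _ ≤ 2 * (b / a) := by gcongr
    have g4 : 4 * |s| * Real.sqrt (a * b) / a ^ 2 ≤ 4 * (b / a) := by
      calc 4 * |s| * Real.sqrt (a * b) / a ^ 2 = 4 * (|s| * Real.sqrt (a * b) / a ^ 2) := by ring
        _ ≤ 4 * (b / a) := by gcongr
    have g1 : 2 * b / a = 2 * (b / a) := by ring
    have : ‖φ H‖ ≤ 2 * (b / a) + 8 * (b / a) + 2 * (b / a) + (4 * (b / a) + 4 * (b / a)) := by
      calc ‖φ H‖ ≤ _ := tri
        _ ≤ 2 * (b / a) + 8 * (b / a) + 2 * (b / a) + (4 * (b / a) + 4 * (b / a)) := by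
            gcongr <;> [exact g1 ▸ e1; exact e2.trans g2; exact e3.trans g3;
              exact e4.trans g4; exact e5.trans g4]
    calc ‖φ H‖ ≤ _ := this
      _ = 20 * b / a := by ring
  exact final
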